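/- arXiv:2104.10952 — 3 statements merged into one kernel-verified Lean document; each statement's English description precedes it below -/
import Mathlib

section
/- Suppose D' ⊆ (F' × Fe) × (E' × Ee) and D'' ⊆ (F'' × Fe) × (E'' × Ee) are Dirac structures (finite-dimensional). Then the composition D' ⊓ D'' := {(f',f'',e',e'') : ∃ (f^e, e^e) with (f', f^e, e', e^e) ∈ D' and (f'', -f^e, e'', e^e) ∈ D''} is contained in its orthogonal (D' ⊓ D'')^⊥ with respect to the bilinear pairing ⟪(f'_1,f''_1,e'_1,e''_1),(f'_2,f''_2,e'_2,e''_2)⟫ = ⟨e'_1|f'_2⟩ + ⟨e'_2|f'_1⟩ + ⟨e''_1|f''_2⟩ + ⟨e''_2|f''_1⟩. -/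
open RealInnerProductSpace

/-- the composition of two Dirac structures is contained in its
orthogonal with respect to the symmetrized pairing on (F'×F''), efforts identified
with flows via the inner product. -/
theorem stmt5 {F' F'' Fe : Type*}
    [NormedAddCommGroup F'] [InnerProductSpace ℝ F'] [FiniteDimensional ℝ F']
    [NormedAddCommGroup F''] [InnerProductSpace ℝ F''] [FiniteDimensional ℝ F'']
    [NormedAddCommGroup Fe] [InnerProductSpace ℝ Fe] [FiniteDimensional ℝ Fe]
    (D' : Set ((F' × Fe) × (F' × Fe)))
    (D'' : Set ((F'' × Fe) × (F'' × Fe)))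
    (hD' : D' = {d' | ∀ d ∈ D',
      (⟪d.2.1, d'.1.1⟫ + ⟪d.2.2, d'.1.2⟫) + (⟪d'.2.1, d.1.1⟫ + ⟪d'.2.2, d.1.2⟫) = 0})
    (hD'' : D'' = {d' | ∀ d ∈ D'',
      (⟪d.2.1, d'.1.1⟫ + ⟪d.2.2, d'.1.2⟫) + (⟪d'.2.1, d.1.1⟫ + ⟪d'.2.2, d.1.2⟫) = 0})
    (comp : Set ((F' × F'') × (F' × F'')))
    (hcomp : comp = {d | ∃ (fe : Fe) (ee : Fe),
      ((d.1.1, fe), (d.2.1, ee)) ∈ D' ∧ ((d.1.2, -fe), (d.2.2, ee)) ∈ D''}) :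
    comp ⊆ {d' | ∀ d ∈ comp,
      (⟪d.2.1, d'.1.1⟫ + ⟪d'.2.1, d.1.1⟫) + (⟪d.2.2, d'.1.2⟫ + ⟪d'.2.2, d.1.2⟫) = 0} := by
  intro x hx y hy
  rw [hcomp] at hx hy
  obtain ⟨fx, ex, hx1, hx2⟩ := hx
  obtain ⟨fy, ey, hy1, hy2⟩ := hy
  have hx1' := hx1
  have hx2' := hx2
  rw [hD'] at hx1'
  rw [hD''] at hx2'
  have h1 := hx1' _ hy1
  have h2 := hx2' _ hy2
  simp only [inner_neg_left, inner_neg_right] at h1 h2 ⊢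
  linarith
end

section
/- Let a < b, m = (a+b)/2. Define M_5 ∈ ℝ^{2×3} by M_5[1,l] = ∫_a^m ω_l^q(z) ω_am^q(z) dz + ∫_m^b ω_l^q(z) ω_am^q(z) dz (i.e., integral over [a,b]) and M_5[2,l] = ∫_a^b ω_l^q(z) ω_mb^q(z) dz, where ω_a^q(z)=(b-z)/(b-a), ω_b^q(z)=(z-a)/(b-a), ω_m^q is the hat function, ω_am^q(z) = (-4z+a+3b)/(a-b)^2, ω_mb^q(z) = (4z-3a-b)/(a-b)^2. Then the matrix identity M_4^⊤ M_2 + M_3^⊤ M_5 = diag(-1, 0, 1) holds, where M_2, M_3, M_4 are the boundary-evaluation and overlap matrices built from the same shape functions (M_3 uses boundary evaluations of ω_l^p). -/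
open Matrix

lemma int_quad (c d A B C : ℝ) :
    (∫ z in c..d, (A * z ^ 2 + B * z + C)) =
      A * (d ^ 3 - c ^ 3) / 3 + B * (d ^ 2 - c ^ 2) / 2 + C * (d - c) := by
  have h1 : IntervalIntegrable (fun z : ℝ => A * z ^ 2) MeasureTheory.volume c d :=
    (by fun_prop : Continuous fun z : ℝ => A * z ^ 2).intervalIntegrable _ _
  have h2 : IntervalIntegrable (fun z : ℝ => B * z) MeasureTheory.volume c d :=
    (by fun_prop : Continuous fun z : ℝ => B * z).intervalIntegrable _ _
  have h3 : IntervalIntegrable (fun _ : ℝ => C) MeasureTheory.volume c d :=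
    intervalIntegrable_const
  rw [intervalIntegral.integral_add (h1.add h2) h3, intervalIntegral.integral_add h1 h2,
    intervalIntegral.integral_const_mul, intervalIntegral.integral_const_mul,
    integral_pow, integral_id, intervalIntegral.integral_const, smul_eq_mul]
  push_cast
  ring

lemma ae_ne_pt (d : ℝ) : ∀ᵐ x : ℝ ∂MeasureTheory.volume, x ≠ d := by
  rw [MeasureTheory.ae_iff]
  simpa using MeasureTheory.measure_singleton d

lemma int_of_eq_Ioo (c d A B C : ℝ) (hcd : c ≤ d) (f : ℝ → ℝ)
    (h : ∀ z ∈ Set.Ioo c d, f z = A * z ^ 2 + B * z + C) :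
    (∫ z in c..d, f z) =
      A * (d ^ 3 - c ^ 3) / 3 + B * (d ^ 2 - c ^ 2) / 2 + C * (d - c) := by
  rw [← int_quad c d A B C]
  apply intervalIntegral.integral_congr_ae
  filter_upwards [ae_ne_pt d] with z hzd hz
  rw [Set.uIoc_of_le hcd] at hz
  exact h z ⟨hz.1, lt_of_le_of_ne hz.2 hzd⟩

lemma intInt_of_eq_Ioo (c d : ℝ) (hcd : c ≤ d) (f g : ℝ → ℝ) (hg : Continuous g)
    (h : ∀ z ∈ Set.Ioo c d, f z = g z) :
    IntervalIntegrable f MeasureTheory.volume c d := by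
  rw [intervalIntegrable_iff_integrableOn_Ioc_of_le hcd]
  refine (hg.integrableOn_Ioc).congr ?_
  refine (MeasureTheory.ae_restrict_iff' measurableSet_Ioc).mpr ?_
  filter_upwards [ae_ne_pt d] with z hzd hz
  exact (h z ⟨hz.1, lt_of_le_of_ne hz.2 hzd⟩).symm

set_option maxHeartbeats 2000000 in
/-- with the shape functions of Appendix A, the matrix identity
M_4ᵀ M_2 + M_3ᵀ M_5 = diag(-1, 0, 1) holds. -/
theorem stmt14 (a b : ℝ) (hab : a < b) (m : ℝ) (hm : m = (a + b) / 2)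
    (ωaq ωbq ωmq ωap ωbp ωmp ωamq ωmbq ωamp ωmbp : ℝ → ℝ)
    (hωaq : ωaq = fun z => (b - z) / (b - a))
    (hωbq : ωbq = fun z => (z - a) / (b - a))
    (hωmq1 : ∀ z ∈ Set.Icc a m, ωmq z = 2 * (z - a) / (b - a))
    (hωmq2 : ∀ z ∈ Set.Icc m b, ωmq z = 2 * (b - z) / (b - a))
    (hωap : ωap = fun z => (z - b) ^ 2 / (a - b) ^ 2)
    (hωbp : ωbp = fun z => (z - a) ^ 2 / (a - b) ^ 2)
    (hωmp : ωmp = fun z => (-4 * z ^ 2 + 4 * (a + b) * z - 4 * a * b) / (a - b) ^ 2)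
    (hωamq : ωamq = fun z => (-4 * z + a + 3 * b) / (a - b) ^ 2)
    (hωmbq : ωmbq = fun z => (4 * z - 3 * a - b) / (a - b) ^ 2)
    (hωamp : ωamp = fun z => if z ∈ Set.Icc a m then 2 / (b - a) else 0)
    (hωmbp : ωmbp = fun z => if z ∈ Set.Icc m b then 2 / (b - a) else 0)
    (M2 M3 M4 M5 : Matrix (Fin 2) (Fin 3) ℝ)
    (hM2 : M2 = Matrix.of
      ![![ωaq m - ωaq a, ωmq m - ωmq a, ωbq m - ωbq a],
        ![ωaq b - ωaq m, ωmq b - ωmq m, ωbq b - ωbq m]])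
    (hM3 : M3 = Matrix.of
      ![![ωap m - ωap a, ωmp m - ωmp a, ωbp m - ωbp a],
        ![ωap b - ωap m, ωmp b - ωmp m, ωbp b - ωbp m]])
    (hM4 : M4 = Matrix.of
      ![![∫ z in a..b, ωap z * ωamp z, ∫ z in a..b, ωmp z * ωamp z,
          ∫ z in a..b, ωbp z * ωamp z],
        ![∫ z in a..b, ωap z * ωmbp z, ∫ z in a..b, ωmp z * ωmbp z,
          ∫ z in a..b, ωbp z * ωmbp z]])
    (hM5 : M5 = Matrix.of
      ![![∫ z in a..b, ωaq z * ωamq z, ∫ z in a..b, ωmq z * ωamq z,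
          ∫ z in a..b, ωbq z * ωamq z],
        ![∫ z in a..b, ωaq z * ωmbq z, ∫ z in a..b, ωmq z * ωmbq z,
          ∫ z in a..b, ωbq z * ωmbq z]]) :
    M4ᵀ * M2 + M3ᵀ * M5 = !![-1, 0, 0; 0, 0, 0; 0, 0, 1] := by
  have hba : b - a ≠ 0 := sub_ne_zero.mpr hab.ne'
  have hab2 : a - b ≠ 0 := sub_ne_zero.mpr hab.ne
  have hma : a ≤ m := by rw [hm]; linarith
  have hmb : m ≤ b := by rw [hm]; linarith
  set D := (b - a) * (a - b) ^ 2 with hD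
  -- values of ωmq at a, m, b
  have vma : ωmq a = 0 := by rw [hωmq1 a ⟨le_refl a, hma⟩]; simp
  have vmm : ωmq m = 1 := by rw [hωmq1 m ⟨hma, le_refl m⟩, hm]; field_simp; ring
  have vmb : ωmq b = 0 := by rw [hωmq2 b ⟨hmb, le_refl b⟩]; simp
  -- indicator facts
  have hin1 : ∀ z ∈ Set.Ioo a m, z ∈ Set.Icc a m := fun z hz => ⟨hz.1.le, hz.2.le⟩
  have hin2 : ∀ z ∈ Set.Ioo m b, z ∈ Set.Icc m b := fun z hz => ⟨hz.1.le, hz.2.le⟩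
  have hout1 : ∀ z ∈ Set.Ioo m b, z ∉ Set.Icc a m := fun z hz h => absurd h.2 (not_le.mpr hz.1)
  have hout2 : ∀ z ∈ Set.Ioo a m, z ∉ Set.Icc m b := fun z hz h => absurd h.1 (not_le.mpr hz.2)
  -- M5 entries
  have E51 : (∫ z in a..b, ωaq z * ωamq z) = 5 / 6 := by
    rw [int_of_eq_Ioo a b (4 / D) ((-7 * b - a) / D) ((3 * b ^ 2 + a * b) / D) hab.le _
      (fun z hz => by rw [hωaq, hωamq, hD]; field_simp; ring)]
    rw [hD]; field_simp; ring
  have i1 : IntervalIntegrable (fun z => ωmq z * ωamq z) MeasureTheory.volume a m :=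
    intInt_of_eq_Ioo a m hma _
      (fun z => 2 * (z - a) / (b - a) * ((-4 * z + a + 3 * b) / (a - b) ^ 2)) (by fun_prop)
      (fun z hz => by rw [hωmq1 z (hin1 z hz), hωamq])
  have i2 : IntervalIntegrable (fun z => ωmq z * ωamq z) MeasureTheory.volume m b :=
    intInt_of_eq_Ioo m b hmb _
      (fun z => 2 * (b - z) / (b - a) * ((-4 * z + a + 3 * b) / (a - b) ^ 2)) (by fun_prop)
      (fun z hz => by rw [hωmq2 z (hin2 z hz), hωamq])
  have E52 : (∫ z in a..b, ωmq z * ωamq z) = 1 / 2 := by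
    rw [← intervalIntegral.integral_add_adjacent_intervals i1 i2,
      int_of_eq_Ioo a m (-8 / D) ((6 * b + 10 * a) / D) ((-6 * a * b - 2 * a ^ 2) / D) hma _
        (fun z hz => by rw [hωmq1 z (hin1 z hz), hωamq, hD]; field_simp; ring),
      int_of_eq_Ioo m b (8 / D) ((-14 * b - 2 * a) / D) ((6 * b ^ 2 + 2 * a * b) / D) hmb _
        (fun z hz => by rw [hωmq2 z (hin2 z hz), hωamq, hD]; field_simp; ring)]
    rw [hm, hD]; field_simp; ring
  have E53 : (∫ z in a..b, ωbq z * ωamq z) = 1 / 6 := by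
    rw [int_of_eq_Ioo a b (-4 / D) ((3 * b + 5 * a) / D) ((-3 * a * b - a ^ 2) / D) hab.le _
      (fun z hz => by rw [hωbq, hωamq, hD]; field_simp; ring)]
    rw [hD]; field_simp; ring
  have E54 : (∫ z in a..b, ωaq z * ωmbq z) = 1 / 6 := by
    rw [int_of_eq_Ioo a b (-4 / D) ((5 * b + 3 * a) / D) ((-b ^ 2 - 3 * a * b) / D) hab.le _
      (fun z hz => by rw [hωaq, hωmbq, hD]; field_simp; ring)]
    rw [hD]; field_simp; ring
  have i3 : IntervalIntegrable (fun z => ωmq z * ωmbq z) MeasureTheory.volume a m :=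
    intInt_of_eq_Ioo a m hma _
      (fun z => 2 * (z - a) / (b - a) * ((4 * z - 3 * a - b) / (a - b) ^ 2)) (by fun_prop)
      (fun z hz => by rw [hωmq1 z (hin1 z hz), hωmbq])
  have i4 : IntervalIntegrable (fun z => ωmq z * ωmbq z) MeasureTheory.volume m b :=
    intInt_of_eq_Ioo m b hmb _
      (fun z => 2 * (b - z) / (b - a) * ((4 * z - 3 * a - b) / (a - b) ^ 2)) (by fun_prop)
      (fun z hz => by rw [hωmq2 z (hin2 z hz), hωmbq])
  have E55 : (∫ z in a..b, ωmq z * ωmbq z) = 1 / 2 := by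
    rw [← intervalIntegral.integral_add_adjacent_intervals i3 i4,
      int_of_eq_Ioo a m (8 / D) ((-2 * b - 14 * a) / D) ((2 * a * b + 6 * a ^ 2) / D) hma _
        (fun z hz => by rw [hωmq1 z (hin1 z hz), hωmbq, hD]; field_simp; ring),
      int_of_eq_Ioo m b (-8 / D) ((10 * b + 6 * a) / D) ((-2 * b ^ 2 - 6 * a * b) / D) hmb _
        (fun z hz => by rw [hωmq2 z (hin2 z hz), hωmbq, hD]; field_simp; ring)]
    rw [hm, hD]; field_simp; ring
  have E56 : (∫ z in a..b, ωbq z * ωmbq z) = 5 / 6 := by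
    rw [int_of_eq_Ioo a b (4 / D) ((-b - 7 * a) / D) ((a * b + 3 * a ^ 2) / D) hab.le _
      (fun z hz => by rw [hωbq, hωmbq, hD]; field_simp; ring)]
    rw [hD]; field_simp; ring
  -- M4 entries
  have j1 : ∀ f : ℝ → ℝ, IntervalIntegrable (fun z => f z * ωamp z) MeasureTheory.volume m b :=
    fun f => intInt_of_eq_Ioo m b hmb _ (fun _ => 0) continuous_const
      (fun z hz => by simp only [hωamp]; simp only [if_neg (hout1 z hz), mul_zero])
  have j2 : ∀ f : ℝ → ℝ, IntervalIntegrable (fun z => f z * ωmbp z) MeasureTheory.volume a m :=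
    fun f => intInt_of_eq_Ioo a m hma _ (fun _ => 0) continuous_const
      (fun z hz => by simp only [hωmbp]; simp only [if_neg (hout2 z hz), mul_zero])
  have ztail : ∀ f : ℝ → ℝ, (∫ z in m..b, f z * ωamp z) = 0 := by
    intro f
    rw [int_of_eq_Ioo m b 0 0 0 hmb _
      (fun z hz => by simp only [hωamp]; simp only [if_neg (hout1 z hz), mul_zero]; ring)]
    ring
  have zhead : ∀ f : ℝ → ℝ, (∫ z in a..m, f z * ωmbp z) = 0 := by
    intro f
    rw [int_of_eq_Ioo a m 0 0 0 hma _
      (fun z hz => by simp only [hωmbp]; simp only [if_neg (hout2 z hz), mul_zero]; ring)]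
    ring
  have E41 : (∫ z in a..b, ωap z * ωamp z) = 7 / 12 := by
    have i5 : IntervalIntegrable (fun z => ωap z * ωamp z) MeasureTheory.volume a m :=
      intInt_of_eq_Ioo a m hma _
        (fun z => (z - b) ^ 2 / (a - b) ^ 2 * (2 / (b - a))) (by fun_prop)
        (fun z hz => by simp only [hωap, hωamp, if_pos (hin1 z hz)])
    rw [← intervalIntegral.integral_add_adjacent_intervals i5 (j1 ωap), ztail ωap,
      int_of_eq_Ioo a m (2 / D) (-4 * b / D) (2 * b ^ 2 / D) hma _
        (fun z hz => by
          simp only [hωap, hωamp, if_pos (hin1 z hz), hD]; field_simp; ring)]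
    rw [hm, hD]; field_simp; ring
  have E42 : (∫ z in a..b, ωmp z * ωamp z) = 2 / 3 := by
    have i5 : IntervalIntegrable (fun z => ωmp z * ωamp z) MeasureTheory.volume a m :=
      intInt_of_eq_Ioo a m hma _
        (fun z => (-4 * z ^ 2 + 4 * (a + b) * z - 4 * a * b) / (a - b) ^ 2 * (2 / (b - a)))
        (by fun_prop)
        (fun z hz => by simp only [hωmp, hωamp, if_pos (hin1 z hz)])
    rw [← intervalIntegral.integral_add_adjacent_intervals i5 (j1 ωmp), ztail ωmp,
      int_of_eq_Ioo a m (-8 / D) ((8 * b + 8 * a) / D) (-8 * a * b / D) hma _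
        (fun z hz => by
          simp only [hωmp, hωamp, if_pos (hin1 z hz), hD]; field_simp; ring)]
    rw [hm, hD]; field_simp; ring
  have E43 : (∫ z in a..b, ωbp z * ωamp z) = 1 / 12 := by
    have i5 : IntervalIntegrable (fun z => ωbp z * ωamp z) MeasureTheory.volume a m :=
      intInt_of_eq_Ioo a m hma _
        (fun z => (z - a) ^ 2 / (a - b) ^ 2 * (2 / (b - a))) (by fun_prop)
        (fun z hz => by simp only [hωbp, hωamp, if_pos (hin1 z hz)])
    rw [← intervalIntegral.integral_add_adjacent_intervals i5 (j1 ωbp), ztail ωbp,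
      int_of_eq_Ioo a m (2 / D) (-4 * a / D) (2 * a ^ 2 / D) hma _
        (fun z hz => by
          simp only [hωbp, hωamp, if_pos (hin1 z hz), hD]; field_simp; ring)]
    rw [hm, hD]; field_simp; ring
  have E44 : (∫ z in a..b, ωap z * ωmbp z) = 1 / 12 := by
    have i5 : IntervalIntegrable (fun z => ωap z * ωmbp z) MeasureTheory.volume m b :=
      intInt_of_eq_Ioo m b hmb _
        (fun z => (z - b) ^ 2 / (a - b) ^ 2 * (2 / (b - a))) (by fun_prop)
        (fun z hz => by simp only [hωap, hωmbp, if_pos (hin2 z hz)])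
    rw [← intervalIntegral.integral_add_adjacent_intervals (j2 ωap) i5, zhead ωap,
      int_of_eq_Ioo m b (2 / D) (-4 * b / D) (2 * b ^ 2 / D) hmb _
        (fun z hz => by
          simp only [hωap, hωmbp, if_pos (hin2 z hz), hD]; field_simp; ring)]
    rw [hm, hD]; field_simp; ring
  have E45 : (∫ z in a..b, ωmp z * ωmbp z) = 2 / 3 := by
    have i5 : IntervalIntegrable (fun z => ωmp z * ωmbp z) MeasureTheory.volume m b :=
      intInt_of_eq_Ioo m b hmb _
        (fun z => (-4 * z ^ 2 + 4 * (a + b) * z - 4 * a * b) / (a - b) ^ 2 * (2 / (b - a)))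
        (by fun_prop)
        (fun z hz => by simp only [hωmp, hωmbp, if_pos (hin2 z hz)])
    rw [← intervalIntegral.integral_add_adjacent_intervals (j2 ωmp) i5, zhead ωmp,
      int_of_eq_Ioo m b (-8 / D) ((8 * b + 8 * a) / D) (-8 * a * b / D) hmb _
        (fun z hz => by
          simp only [hωmp, hωmbp, if_pos (hin2 z hz), hD]; field_simp; ring)]
    rw [hm, hD]; field_simp; ring
  have E46 : (∫ z in a..b, ωbp z * ωmbp z) = 7 / 12 := by
    have i5 : IntervalIntegrable (fun z => ωbp z * ωmbp z) MeasureTheory.volume m b :=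
      intInt_of_eq_Ioo m b hmb _
        (fun z => (z - a) ^ 2 / (a - b) ^ 2 * (2 / (b - a))) (by fun_prop)
        (fun z hz => by simp only [hωbp, hωmbp, if_pos (hin2 z hz)])
    rw [← intervalIntegral.integral_add_adjacent_intervals (j2 ωbp) i5, zhead ωbp,
      int_of_eq_Ioo m b (2 / D) (-4 * a / D) (2 * a ^ 2 / D) hmb _
        (fun z hz => by
          simp only [hωbp, hωmbp, if_pos (hin2 z hz), hD]; field_simp; ring)]
    rw [hm, hD]; field_simp; ring
  -- M2, M3 entries
  have B11 : ωaq m - ωaq a = -(1 / 2) := by rw [hωaq, hm]; field_simp; ring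
  have B12 : ωmq m - ωmq a = 1 := by rw [vmm, vma]; ring
  have B13 : ωbq m - ωbq a = 1 / 2 := by rw [hωbq, hm]; field_simp; ring
  have B21 : ωaq b - ωaq m = -(1 / 2) := by rw [hωaq, hm]; field_simp; ring
  have B22 : ωmq b - ωmq m = -1 := by rw [vmm, vmb]; ring
  have B23 : ωbq b - ωbq m = 1 / 2 := by rw [hωbq, hm]; field_simp; ring
  have C11 : ωap m - ωap a = -(3 / 4) := by rw [hωap, hm]; field_simp; ring
  have C12 : ωmp m - ωmp a = 1 := by rw [hωmp, hm]; field_simp; ring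
  have C13 : ωbp m - ωbp a = 1 / 4 := by rw [hωbp, hm]; field_simp; ring
  have C21 : ωap b - ωap m = -(1 / 4) := by rw [hωap, hm]; field_simp; ring
  have C22 : ωmp b - ωmp m = -1 := by rw [hωmp, hm]; field_simp; ring
  have C23 : ωbp b - ωbp m = 3 / 4 := by rw [hωbp, hm]; field_simp; ring
  rw [hM2, hM3, hM4, hM5, E41, E42, E43, E44, E45, E46, E51, E52, E53, E54, E55, E56,
    B11, B12, B13, B21, B22, B23, C11, C12, C13, C21, C22, C23]
  ext i j
  fin_cases i <;> fin_cases j <;>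
    simp [Matrix.mul_apply, Fin.sum_univ_two, Matrix.vecHead, Matrix.vecTail,
      Matrix.transpose_apply] <;> norm_num
end

section
/- Let H : ℝ^n → ℝ be C¹ and let R := [[-A-A^⊤, C^⊤-B],[C-B^⊤, D+D^⊤]] ⪰ 0 (positive semidefinite). For any C¹ trajectory (u, x, y) of ẋ = A∇H(x) + Bu, y = C∇H(x) + Du, the dissipation inequality d/dt H(x(t)) ≤ y(t)^⊤ u(t) holds for all t ≥ 0. -/
open Matrix

set_option synthInstance.maxHeartbeats 1000000 in
lemma fderiv_eq_dot {n : ℕ} (H : (Fin n → ℝ) → ℝ) (gradH : (Fin n → ℝ) → (Fin n → ℝ))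
    (hgrad : ∀ x i, gradH x i = fderiv ℝ H x (Pi.single i 1))
    (p v : Fin n → ℝ) : fderiv ℝ H p v = gradH p ⬝ᵥ v := by
  have hv : v = ∑ i : Fin n, Pi.single i (v i) := (Finset.univ_sum_single v).symm
  conv_lhs => rw [hv]
  rw [map_sum, dotProduct]
  refine Finset.sum_congr rfl fun i _ => ?_
  have : Pi.single i (v i) = v i • (Pi.single i (1:ℝ) : Fin n → ℝ) := by
    ext j
    rcases eq_or_ne j i with h | h <;> simp [h, Pi.single_apply]
  rw [this, _root_.map_smul, smul_eq_mul, hgrad]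
  ring

/-- if R = [[-A-Aᵀ, Cᵀ-B],[C-Bᵀ, D+Dᵀ]] ⪰ 0 then along any C¹
trajectory of ẋ = A∇H(x)+Bu, y = C∇H(x)+Du, the dissipation inequality
d/dt H(x(t)) ≤ y(t)ᵀ u(t) holds for all t ≥ 0. -/
theorem stmt18 {n mm : ℕ}
    (A : Matrix (Fin n) (Fin n) ℝ) (B : Matrix (Fin n) (Fin mm) ℝ)
    (C : Matrix (Fin mm) (Fin n) ℝ) (D : Matrix (Fin mm) (Fin mm) ℝ)
    (hR : (Matrix.fromBlocks (-A - Aᵀ) (Cᵀ - B) (C - Bᵀ) (D + Dᵀ)).PosSemidef)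
    (H : (Fin n → ℝ) → ℝ) (hH : ContDiff ℝ 1 H)
    (gradH : (Fin n → ℝ) → (Fin n → ℝ))
    (hgrad : ∀ x i, gradH x i = fderiv ℝ H x (Pi.single i 1))
    (x : ℝ → (Fin n → ℝ)) (u y : ℝ → (Fin mm → ℝ))
    (hx : ∀ t, 0 ≤ t → HasDerivAt x (A *ᵥ gradH (x t) + B *ᵥ u t) t)
    (hy : ∀ t, 0 ≤ t → y t = C *ᵥ gradH (x t) + D *ᵥ u t) :
    ∀ t, 0 ≤ t → deriv (fun τ => H (x τ)) t ≤ y t ⬝ᵥ u t := by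
  intro t ht
  have hdH : HasDerivAt (fun τ => H (x τ))
      (fderiv ℝ H (x t) (A *ᵥ gradH (x t) + B *ᵥ u t)) t :=
    ((hH.differentiable one_ne_zero (x t)).hasFDerivAt).comp_hasDerivAt t (hx t ht)
  rw [hdH.deriv, fderiv_eq_dot H gradH hgrad]
  have hq := hR.dotProduct_mulVec_nonneg (Sum.elim (gradH (x t)) (u t))
  rw [Matrix.fromBlocks_mulVec] at hq
  simp only [star_trivial, sumElim_dotProduct_sumElim, Matrix.sub_mulVec,
    Matrix.add_mulVec, Matrix.neg_mulVec, dotProduct_add, dotProduct_sub,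
    dotProduct_neg, Sum.elim_comp_inl, Sum.elim_comp_inr] at hq
  have e1 : gradH (x t) ⬝ᵥ Aᵀ *ᵥ gradH (x t) = gradH (x t) ⬝ᵥ A *ᵥ gradH (x t) := by
    rw [Matrix.dotProduct_mulVec, Matrix.vecMul_transpose, dotProduct_comm]
  have e2 : gradH (x t) ⬝ᵥ Cᵀ *ᵥ u t = u t ⬝ᵥ C *ᵥ gradH (x t) := by
    rw [Matrix.dotProduct_mulVec, Matrix.vecMul_transpose, dotProduct_comm]
  have e3 : u t ⬝ᵥ Bᵀ *ᵥ gradH (x t) = gradH (x t) ⬝ᵥ B *ᵥ u t := by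
    rw [Matrix.dotProduct_mulVec, Matrix.vecMul_transpose, dotProduct_comm]
  have e4 : u t ⬝ᵥ Dᵀ *ᵥ u t = u t ⬝ᵥ D *ᵥ u t := by
    rw [Matrix.dotProduct_mulVec, Matrix.vecMul_transpose, dotProduct_comm]
  rw [hy t ht, dotProduct_comm _ (u t)]
  simp only [dotProduct_add]
  linarith [hq]
end
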